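/- Let q₀ ≥ q₁ ≥ ⋯ ≥ q_{n−1} be a nonincreasing sequence of reals and let m ≥ 1 with n ≥ 2m+1. Among all ways to append m real values to this sequence, the median of the resulting n+m values is minimized when all m appended values are below q_{n−1}, and the minimum achievable median equals (q_{⌊(n+m−1)/2⌋} + q_{⌊(n+m)/2⌋})/2. -/

import Mathlib

open Finset

/-- Median of a multiset of reals: average of the two middle order statistics
(equal to the middle one for odd cardinality). -/
noncomputable def med (s : Multiset ℝ) : ℝ :=
  ((s.sort (· ≤ ·)).getD ((Multiset.card s - 1) / 2) 0 +
    (s.sort (· ≤ ·)).getD (Multiset.card s / 2) 0) / 2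

/-- `m`-trimmed mean: remove the `m` largest and `m` smallest values and average the rest. -/
noncomputable def trimmedMean (m : ℕ) (s : Multiset ℝ) : ℝ :=
  ((((s.sort (· ≤ ·)).drop m).take (Multiset.card s - 2 * m)).sum) /
    ((Multiset.card s : ℝ) - 2 * m)

/-- The multiset of the first `n` values of `q`. -/
noncomputable def qMs (n : ℕ) (q : ℕ → ℝ) : Multiset ℝ :=
  (Finset.range n).val.map q

/-- In a sorted list, if at least `j+1` elements are `≤ v`, then the `j`-th element is `≤ v`. -/
lemma aux_sorted_getD_le (l : List ℝ) (hl : l.Pairwise (· ≤ ·)) (v : ℝ) (j : ℕ)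
    (h : j + 1 ≤ l.countP (fun x => decide (x ≤ v))) : l.getD j 0 ≤ v := by
  induction l generalizing j with
  | nil => simp at h
  | cons a l ih =>
    rcases List.pairwise_cons.mp hl with ⟨ha, hl'⟩
    by_cases hav : a ≤ v
    · cases j with
      | zero => simpa using hav
      | succ j =>
        have hcl : j + 1 ≤ l.countP (fun x => decide (x ≤ v)) := by
          rw [List.countP_cons] at h; simp [hav] at h; omega
        simpa using ih hl' j hcl
    · exfalso
      have h0 : (a :: l).countP (fun x => decide (x ≤ v)) = 0 := by
        rw [List.countP_eq_zero]
        intro x hx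
        simp only [decide_eq_true_eq]
        rcases List.mem_cons.mp hx with rfl | hx
        · exact hav
        · exact fun hxv => hav (le_trans (ha x hx) hxv)
      omega

/-- In a sorted list, at least `k+1` elements are `≤` the `k`-th element. -/
lemma aux_countP_ge (l : List ℝ) (hl : l.Pairwise (· ≤ ·)) (k : ℕ) (hk : k < l.length) :
    k + 1 ≤ l.countP (fun x => decide (x ≤ l.getD k 0)) := by
  have h1 : (l.take (k + 1)).countP (fun x => decide (x ≤ l.getD k 0)) = k + 1 := by
    rw [List.countP_eq_length.mpr, List.length_take]
    · omega
    · intro a ha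
      simp only [decide_eq_true_eq]
      obtain ⟨i, hi, hia⟩ := List.getElem_of_mem ha
      rw [List.length_take] at hi
      have hik : i ≤ k := by omega
      rw [List.getElem_take] at hia
      rw [List.getD_eq_getElem l 0 hk, ← hia]
      rcases Nat.lt_or_ge i k with hlt | hge
      · exact (List.pairwise_iff_getElem.mp hl i k (by omega) hk hlt)
      · have : i = k := by omega
        subst this; exact le_refl _
  calc k + 1 = (l.take (k + 1)).countP (fun x => decide (x ≤ l.getD k 0)) := h1.symm
    _ ≤ l.countP (fun x => decide (x ≤ l.getD k 0)) :=
        (List.take_sublist _ _).countP_le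

/-- The explicit descending-reindexed list of `q`-values. -/
noncomputable def L0 (n : ℕ) (q : ℕ → ℝ) : List ℝ :=
  (List.range n).map (fun i => q (n - 1 - i))

lemma L0_length (n : ℕ) (q : ℕ → ℝ) : (L0 n q).length = n := by simp [L0]

lemma L0_getD (n : ℕ) (q : ℕ → ℝ) (j : ℕ) (hj : j < n) :
    (L0 n q).getD j 0 = q (n - 1 - j) := by
  rw [List.getD_eq_getElem _ 0 (by simp [L0_length, hj])]
  simp [L0]

lemma L0_sorted (n : ℕ) (q : ℕ → ℝ) (hq : ∀ i j, i ≤ j → j < n → q j ≤ q i) :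
    (L0 n q).Pairwise (· ≤ ·) := by
  unfold L0
  rw [List.pairwise_map]
  refine (List.pairwise_lt_range (n := n)).imp_of_mem ?_
  intro a b ha hb hab
  rw [List.mem_range] at ha hb
  exact hq (n - 1 - b) (n - 1 - a) (by omega) (by omega)

lemma L0_coe (n : ℕ) (q : ℕ → ℝ) : (↑(L0 n q) : Multiset ℝ) = qMs n q := by
  have hrange : Multiset.map (fun i => n - 1 - i) (Multiset.range n) = Multiset.range n := by
    have hnd : (Multiset.map (fun i => n - 1 - i) (Multiset.range n)).Nodup := by
      refine Multiset.Nodup.map_on ?_ (Multiset.nodup_range n)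
      intro x hx y hy hxy
      rw [Multiset.mem_range] at hx hy
      omega
    refine Multiset.eq_of_le_of_card_le ((Multiset.le_iff_subset hnd).mpr ?_) (by simp)
    intro x hx
    rw [Multiset.mem_map] at hx
    obtain ⟨i, hi, rfl⟩ := hx
    rw [Multiset.mem_range] at hi ⊢
    omega
  show ((List.range n).map (fun i => q (n - 1 - i)) : Multiset ℝ) = qMs n q
  rw [← Multiset.map_coe]
  have hr : (↑(List.range n) : Multiset ℕ) = Multiset.range n := rfl
  rw [hr]
  unfold qMs
  rw [Finset.range_val]
  conv_rhs => rw [← hrange, Multiset.map_map]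
  rfl

lemma sort_qMs (n : ℕ) (q : ℕ → ℝ) (hq : ∀ i j, i ≤ j → j < n → q j ≤ q i) :
    (qMs n q).sort (· ≤ ·) = L0 n q := by
  refine List.Perm.eq_of_pairwise' (Multiset.pairwise_sort _ _) (L0_sorted n q hq) ?_
  rw [← Multiset.coe_eq_coe, Multiset.sort_eq, L0_coe]

lemma qMs_card (n : ℕ) (q : ℕ → ℝ) : Multiset.card (qMs n q) = n := by simp [qMs]

/-- Key lower bound: the `k`-th order statistic of `qMs n q + t` is at least `q (n+m-1-k)`. -/
lemma aux_key (n m k : ℕ) (q : ℕ → ℝ) (hq : ∀ i j, i ≤ j → j < n → q j ≤ q i)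
    (t : Multiset ℝ) (ht : Multiset.card t = m) (hk1 : m ≤ k) (hk2 : k < n + m) :
    q (n + m - 1 - k) ≤ ((qMs n q + t).sort (· ≤ ·)).getD k 0 := by
  classical
  set L := (qMs n q + t).sort (· ≤ ·) with hL
  have hlen : L.length = n + m := by
    rw [hL, Multiset.length_sort, Multiset.card_add, qMs_card, ht]
  set v := L.getD k 0 with hv
  have h1 : k + 1 ≤ L.countP (fun x => decide (x ≤ v)) :=
    aux_countP_ge L (Multiset.pairwise_sort _ _) k (by omega)
  have h2 : L.countP (fun x => decide (x ≤ v)) =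
      Multiset.countP (fun x => x ≤ v) (qMs n q + t) := by
    conv_rhs => rw [← Multiset.sort_eq (qMs n q + t) (· ≤ ·)]
    rw [Multiset.coe_countP]
  have h3 : Multiset.countP (fun x => x ≤ v) t ≤ m := by
    rw [← ht]; exact Multiset.countP_le_card _ t
  have h4 : k + 1 - m ≤ Multiset.countP (fun x => x ≤ v) (qMs n q) := by
    rw [Multiset.countP_add] at h2; omega
  have h5 : (k - m) + 1 ≤ (L0 n q).countP (fun x => decide (x ≤ v)) := by
    have := (Multiset.coe_countP (fun x => x ≤ v) (L0 n q)).symm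
    rw [L0_coe] at this
    omega
  have h6 := aux_sorted_getD_le (L0 n q) (L0_sorted n q hq) v (k - m) h5
  rw [L0_getD n q (k - m) (by omega)] at h6
  have : n - 1 - (k - m) = n + m - 1 - k := by omega
  rwa [this] at h6

theorem stmt6 (n m : ℕ) (hm : 1 ≤ m) (hn : 2 * m + 1 ≤ n) (q : ℕ → ℝ)
    (hq : ∀ i j, i ≤ j → j < n → q j ≤ q i) :
    (∀ t : Multiset ℝ, Multiset.card t = m →
      (q ((n + m - 1) / 2) + q ((n + m) / 2)) / 2 ≤ med (qMs n q + t)) ∧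
    (∀ t : Multiset ℝ, Multiset.card t = m → (∀ x ∈ t, x < q (n - 1)) →
      med (qMs n q + t) = (q ((n + m - 1) / 2) + q ((n + m) / 2)) / 2) := by
  constructor
  · intro t ht
    have hcard : Multiset.card (qMs n q + t) = n + m := by
      rw [Multiset.card_add, qMs_card, ht]
    have ha := aux_key n m ((n + m - 1) / 2) q hq t ht (by omega) (by omega)
    have hb := aux_key n m ((n + m) / 2) q hq t ht (by omega) (by omega)
    have e1 : n + m - 1 - (n + m - 1) / 2 = (n + m) / 2 := by omega
    have e2 : n + m - 1 - (n + m) / 2 = (n + m - 1) / 2 := by omega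
    rw [e1] at ha; rw [e2] at hb
    rw [med, hcard]
    linarith
  · intro t ht htlt
    have hcard : Multiset.card (qMs n q + t) = n + m := by
      rw [Multiset.card_add, qMs_card, ht]
    set T := t.sort (· ≤ ·) with hT
    have hTlen : T.length = m := by rw [hT, Multiset.length_sort, ht]
    have hsort : (qMs n q + t).sort (· ≤ ·) = T ++ L0 n q := by
      refine List.Perm.eq_of_pairwise' (Multiset.pairwise_sort _ _) ?_ ?_
      swap
      · rw [← Multiset.coe_eq_coe, Multiset.sort_eq, ← Multiset.coe_add, L0_coe,
          Multiset.sort_eq, add_comm]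
      · rw [List.pairwise_append]
        refine ⟨Multiset.pairwise_sort _ _, L0_sorted n q hq, ?_⟩
        intro a haT b hbL
        have hat : a ∈ t := by rwa [← Multiset.mem_sort (r := (· ≤ ·))]
        obtain ⟨i, hi, rfl⟩ := List.mem_map.mp hbL
        rw [List.mem_range] at hi
        have : q (n - 1) ≤ q (n - 1 - i) := hq (n - 1 - i) (n - 1) (by omega) (by omega)
        exact le_trans (htlt a hat).le this
    have hget : ∀ k, m ≤ k → k < n + m →
        ((qMs n q + t).sort (· ≤ ·)).getD k 0 = q (n + m - 1 - k) := by
      intro k hk1 hk2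
      rw [hsort, List.getD_append_right _ _ _ _ (by omega), hTlen,
        L0_getD n q (k - m) (by omega)]
      congr 1; omega
    rw [med, hcard, hget ((n + m - 1) / 2) (by omega) (by omega),
      hget ((n + m) / 2) (by omega) (by omega)]
    have e1 : n + m - 1 - (n + m - 1) / 2 = (n + m) / 2 := by omega
    have e2 : n + m - 1 - (n + m) / 2 = (n + m - 1) / 2 := by omega
    rw [e1, e2]
    ring
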